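/- Let c < 0, a > 0, M ≥ 1, T > 0, b ∈ (0,1), β₀ ∈ (0,1). Define β_F(T) as the solution at time T of: β' = (a/M)(1−β) on [0,bT] then β' = (c/M)β(1−β) on [bT,T], starting at β₀; define β_L(T) via β' = (c/M)β(1−β) on [0,(1−b)T] then β' = (a/M)(1−β) on [(1−b)T,T], starting at β₀. Then β_L(T) > β_F(T). -/

import Mathlib

open Real Set

private lemma const_of_deriv_zero {f : ℝ → ℝ} {t₀ t₁ : ℝ} (h : t₀ < t₁)
    (hc : ContinuousOn f (Icc t₀ t₁))
    (hd : ∀ t ∈ Ioo t₀ t₁, HasDerivAt f 0 t) : f t₁ = f t₀ := by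
  obtain ⟨x, _, hx⟩ := exists_hasDerivAt_eq_slope f (fun _ => 0) h hc hd
  have hne : t₁ - t₀ ≠ 0 := ne_of_gt (sub_pos.mpr h)
  rw [eq_comm, div_eq_iff hne] at hx
  linarith [hx]

private lemma exp_segment {β : ℝ → ℝ} {α t₀ t₁ : ℝ} (h : t₀ < t₁)
    (hc : ContinuousOn β (Icc t₀ t₁))
    (hd : ∀ t ∈ Ioo t₀ t₁, HasDerivAt β (α * (1 - β t)) t) :
    1 - β t₁ = (1 - β t₀) * Real.exp (-(α * (t₁ - t₀))) := by
  have hgc : ContinuousOn (fun t => (1 - β t) * Real.exp (α * (t - t₀))) (Icc t₀ t₁) :=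
    (continuousOn_const.sub hc).mul (by fun_prop)
  have hgd : ∀ t ∈ Ioo t₀ t₁,
      HasDerivAt (fun t => (1 - β t) * Real.exp (α * (t - t₀))) 0 t := by
    intro t ht
    have h1 : HasDerivAt (fun t => 1 - β t) (-(α * (1 - β t))) t := (hd t ht).const_sub 1
    have h2 : HasDerivAt (fun t => Real.exp (α * (t - t₀)))
        (Real.exp (α * (t - t₀)) * α) t := by
      have hin : HasDerivAt (fun t => α * (t - t₀)) α t := by
        simpa using ((hasDerivAt_id t).sub_const t₀).const_mul α
      simpa [mul_comm] using hin.exp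
    have := h1.fun_mul h2
    exact this.congr_deriv (by ring)
  have key := const_of_deriv_zero h hgc hgd
  simp only [sub_self, mul_zero, Real.exp_zero, mul_one] at key
  have hx : Real.exp (α * (t₁ - t₀)) ≠ 0 := Real.exp_ne_zero _
  rw [Real.exp_neg]
  field_simp
  linarith [key]

private lemma log_segment {β : ℝ → ℝ} {c' t₀ t₁ : ℝ} (h : t₀ < t₁)
    (hβ : Continuous β)
    (hd : ∀ t ∈ Ioo t₀ t₁, HasDerivAt β (c' * β t * (1 - β t)) t)
    (h0 : β t₀ ∈ Ioo (0:ℝ) 1) :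
    β t₁ ∈ Ioo (0:ℝ) 1 ∧
      β t₁ * (1 - β t₀) = β t₀ * (1 - β t₁) * Real.exp (c' * (t₁ - t₀)) := by
  set I : ℝ → ℝ := fun t => ∫ s in t₀..t, β s with hIdef
  have hI' : ∀ t : ℝ, HasDerivAt I (β t) t := by
    intro t
    exact intervalIntegral.integral_hasDerivAt_right (hβ.intervalIntegrable _ _)
      (hβ.stronglyMeasurable.stronglyMeasurableAtFilter) hβ.continuousAt
  have hI0 : I t₀ = 0 := intervalIntegral.integral_same
  -- first invariant : β t * exp (c' * (I t - (t - t₀))) is constant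
  have hg1 : ∀ t ∈ Ioo t₀ t₁,
      HasDerivAt (fun t => β t * Real.exp (c' * (I t - (t - t₀)))) 0 t := by
    intro t ht
    have hin : HasDerivAt (fun t => c' * (I t - (t - t₀))) (c' * (β t - 1)) t :=
      ((hI' t).sub ((hasDerivAt_id t).sub_const t₀)).const_mul c'
    have h2 := hin.exp
    have := (hd t ht).fun_mul h2
    exact this.congr_deriv (by ring)
  have key1 : β t₁ * Real.exp (c' * (I t₁ - (t₁ - t₀))) = β t₀ := by
    have := const_of_deriv_zero h
      ((hβ.mul (by fun_prop)).continuousOn) hg1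
    simpa [hI0] using this
  -- second invariant : (1 - β t) * exp (c' * I t) is constant
  have hg2 : ∀ t ∈ Ioo t₀ t₁,
      HasDerivAt (fun t => (1 - β t) * Real.exp (c' * I t)) 0 t := by
    intro t ht
    have hin : HasDerivAt (fun t => c' * I t) (c' * β t) t := (hI' t).const_mul c'
    have h2 := hin.exp
    have := ((hd t ht).const_sub 1).fun_mul h2
    exact this.congr_deriv (by ring)
  have key2 : (1 - β t₁) * Real.exp (c' * I t₁) = 1 - β t₀ := by
    have := const_of_deriv_zero h
      ((continuous_const.sub hβ).mul (by fun_prop)).continuousOn hg2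
    simpa [hI0] using this
  have f1 : β t₁ = β t₀ * Real.exp (-(c' * (I t₁ - (t₁ - t₀)))) := by
    rw [← key1, Real.exp_neg]
    field_simp
  have f2 : 1 - β t₁ = (1 - β t₀) * Real.exp (-(c' * I t₁)) := by
    rw [← key2, Real.exp_neg]
    field_simp
  have hpos : 0 < β t₁ := by
    rw [f1]; exact mul_pos h0.1 (Real.exp_pos _)
  have hlt : β t₁ < 1 := by
    have : 0 < 1 - β t₁ := by
      rw [f2]; exact mul_pos (by linarith [h0.2]) (Real.exp_pos _)
    linarith
  refine ⟨⟨hpos, hlt⟩, ?_⟩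
  have hEE : Real.exp (c' * (I t₁ - (t₁ - t₀))) * Real.exp (c' * (t₁ - t₀)) =
      Real.exp (c' * I t₁) := by
    rw [← Real.exp_add]; ring_nf
  linear_combination (-(β t₁)) * key2 + ((1 - β t₁) * Real.exp (c' * (t₁ - t₀))) * key1 -
    (β t₁ * (1 - β t₁)) * hEE

set_option maxHeartbeats 1000000 in
/-- ODE comparison underlying optimality of influencing last when the organic drift
coefficient `c < 0`: `β_L(T) > β_F(T)`. -/
theorem influence_last_optimal_of_neg_drift (c a M T b β₀ : ℝ)
    (hc : c < 0) (ha : 0 < a) (hM : 1 ≤ M) (hT : 0 < T)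
    (hb : b ∈ Set.Ioo (0:ℝ) 1) (hβ₀ : β₀ ∈ Set.Ioo (0:ℝ) 1)
    (βF βL : ℝ → ℝ) (hFc : Continuous βF) (hLc : Continuous βL)
    (hF0 : βF 0 = β₀) (hL0 : βL 0 = β₀)
    (hF1 : ∀ t ∈ Set.Ioo 0 (b * T), HasDerivAt βF ((a / M) * (1 - βF t)) t)
    (hF2 : ∀ t ∈ Set.Ioo (b * T) T, HasDerivAt βF ((c / M) * βF t * (1 - βF t)) t)
    (hL1 : ∀ t ∈ Set.Ioo 0 ((1 - b) * T), HasDerivAt βL ((c / M) * βL t * (1 - βL t)) t)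
    (hL2 : ∀ t ∈ Set.Ioo ((1 - b) * T) T, HasDerivAt βL ((a / M) * (1 - βL t)) t) :
    βF T < βL T := by
  obtain ⟨hb0, hb1⟩ := hb
  obtain ⟨hβ₀0, hβ₀1⟩ := hβ₀
  have hM0 : (0:ℝ) < M := by linarith
  have hbT : 0 < b * T := mul_pos hb0 hT
  have hbT' : b * T < T := by nlinarith
  have hrT : 0 < (1 - b) * T := mul_pos (by linarith) hT
  have hrT' : (1 - b) * T < T := by nlinarith
  -- abbreviations
  set m : ℝ := Real.exp (-(a / M * (b * T))) with hm
  set k : ℝ := Real.exp (c / M * ((1 - b) * T)) with hk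
  have hm0 : 0 < m := Real.exp_pos _
  have hm1 : m < 1 := by
    rw [hm]; apply Real.exp_lt_one_iff.mpr
    have : 0 < a / M * (b * T) := by positivity
    linarith
  have hk0 : 0 < k := Real.exp_pos _
  have hk1 : k < 1 := by
    rw [hk]; apply Real.exp_lt_one_iff.mpr
    have h1 : c / M < 0 := div_neg_of_neg_of_pos hc hM0
    exact mul_neg_of_neg_of_pos h1 hrT
  -- βF first segment (exponential)
  have eF1 : 1 - βF (b * T) = (1 - β₀) * m := by
    have := exp_segment hbT (hFc.continuousOn) (fun t ht => hF1 t ht)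
    rw [hF0, sub_zero] at this
    exact this
  have hxF : βF (b * T) ∈ Ioo (0:ℝ) 1 := by
    constructor
    · nlinarith
    · have : 0 < 1 - βF (b * T) := by
        rw [eF1]; exact mul_pos (by linarith) hm0
      linarith
  -- βF second segment (logistic)
  obtain ⟨hyF, eF2⟩ := log_segment hbT' hFc (fun t ht => hF2 t ht) hxF
  have hTT : T - b * T = (1 - b) * T := by ring
  rw [hTT, ← hk] at eF2
  -- βL first segment (logistic)
  have h0L : βL 0 ∈ Ioo (0:ℝ) 1 := by rw [hL0]; exact ⟨hβ₀0, hβ₀1⟩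
  obtain ⟨hzL, eL1⟩ := log_segment hrT hLc (fun t ht => hL1 t ht) h0L
  rw [hL0, sub_zero, ← hk] at eL1
  -- βL second segment (exponential)
  have eL2 : 1 - βL T = (1 - βL ((1 - b) * T)) * m := by
    have := exp_segment hrT' (hLc.continuousOn) (fun t ht => hL2 t ht)
    have hTT2 : T - (1 - b) * T = b * T := by ring
    rw [hTT2] at this
    exact this
  -- final algebra
  set x := βF (b * T)
  set y := βF T
  set z := βL ((1 - b) * T)
  set w := βL T
  set u₀ : ℝ := 1 - β₀ with hu₀
  have hu₀0 : 0 < u₀ := by rw [hu₀]; linarith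
  have hu₀1 : u₀ < 1 := by rw [hu₀]; linarith
  -- derived linear relations
  have e1 : 1 - x = u₀ * m := eF1
  have r1 : (1 - y) * (u₀ * m + (1 - u₀ * m) * k) = u₀ * m := by
    linear_combination (-1 : ℝ) * eF2 + (y + (1 - y) * k) * e1
  have r2 : (1 - z) * (u₀ + β₀ * k) = u₀ := by linear_combination -eL1
  have r3 : (1 - w) * (u₀ + β₀ * k) = u₀ * m := by
    linear_combination (u₀ + β₀ * k) * eL2 + m * r2
  have hum1 : u₀ * m < 1 := by nlinarith [mul_pos hu₀0 hm0]
  have hD1 : 0 < u₀ * m + (1 - u₀ * m) * k :=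
    add_pos (mul_pos hu₀0 hm0) (mul_pos (by linarith) hk0)
  have hD2 : 0 < u₀ + β₀ * k := add_pos hu₀0 (mul_pos hβ₀0 hk0)
  have hD : u₀ * m + (1 - u₀ * m) * k < u₀ + β₀ * k := by
    nlinarith [mul_pos (mul_pos hu₀0 (sub_pos.mpr hm1)) (sub_pos.mpr hk1), hu₀]
  have h1w : 0 < 1 - w := by nlinarith [mul_pos (mul_pos hu₀0 hm0) hD2, r3, hD2]
  nlinarith [mul_pos h1w (sub_pos.mpr hD), r1, r3, hD1]
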